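/- (Value of a Gaussian policy, one-step evaluation) Suppose at time t the policy is π_t = N(K(x - ρ_t w), λ B C^{T-t-1}) with K ∈ ℝ, B > 0, C > 0, ρ_t = r_f^{-(T-t)}, and the value at t+1 is J(t+1, y) = A^{T-t-1}(y - ρ_{t+1} w)² + f(t+1) where A = r_f² + (a²+σ²)K² + 2 r_f a K. Then J(t,x) := E[J(t+1, r_f x + r U)] + λ∫π_t ln π_t = A^{T-t}(x - ρ_t w)² + A^{T-t-1}(a²+σ²)λ B C^{T-t-1} - (λ/2) ln(2πλB C^{T-t-1}) - λ/2 + f(t+1), where r has mean a, variance σ², and U ~ π_t is independent of r. -/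

import Mathlib

open MeasureTheory Real

/-- Gaussian density with mean `m` and variance `s2`. -/
noncomputable def gaussPdf (m s2 u : ℝ) : ℝ :=
  (Real.sqrt (2 * Real.pi * s2))⁻¹ * Real.exp (-(u - m) ^ 2 / (2 * s2))

/-- One-step evaluation of a Gaussian policy in the exploratory MV problem. -/

lemma integrable_sq_mul_exp_neg_mul_sq {b : ℝ} (hb : 0 < b) :
    Integrable fun y : ℝ => y ^ 2 * Real.exp (-b * y ^ 2) := by
  refine ((integrable_exp_neg_mul_sq (half_pos hb)).const_mul (2 / b)).mono' ?_ ?_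
  · exact ((measurable_id.pow_const 2).mul
      (measurable_exp.comp ((measurable_id.pow_const 2).const_mul (-b)))).aestronglyMeasurable
  · filter_upwards with y
    have h1 : (b/2) * y^2 ≤ Real.exp ((b/2) * y^2) := by
      nlinarith [Real.add_one_le_exp ((b/2) * y^2)]
    have h2 : Real.exp (-b * y^2) * Real.exp ((b/2) * y^2) = Real.exp (-(b/2) * y^2) := by
      rw [← Real.exp_add]; ring_nf
    have h3 := Real.exp_pos (-b * y^2)
    have h4 := Real.exp_pos (-(b/2) * y^2)
    rw [Real.norm_eq_abs, abs_of_nonneg (by positivity)]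
    rw [show (2:ℝ)/b * Real.exp (-(b/2)*y^2) = (2/b) * (Real.exp (-b*y^2) * Real.exp ((b/2)*y^2)) by rw [h2]]
    have h5 : y^2 * Real.exp (-b*y^2) ≤ (2/b) * (Real.exp (-b*y^2) * ((b/2)*y^2)) := by
      rw [show (2/b) * (Real.exp (-b*y^2) * ((b/2)*y^2)) = y^2 * Real.exp (-b*y^2) by field_simp]
    refine h5.trans ?_
    have h6 := mul_le_mul_of_nonneg_left h1 h3.le
    exact mul_le_mul_of_nonneg_left h6 (by positivity)

lemma integral_mul_exp_neg_mul_sq_zero {b : ℝ} : ∫ y : ℝ, y * Real.exp (-b * y ^ 2) = 0 := by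
  have h := integral_neg_eq_self (fun y : ℝ => y * Real.exp (-b * y ^ 2)) volume
  simp only [neg_sq, neg_mul] at h ⊢
  rw [integral_neg] at h
  linarith

lemma integral_sq_mul_exp_neg_mul_sq {b : ℝ} (hb : 0 < b) :
    ∫ y : ℝ, y ^ 2 * Real.exp (-b * y ^ 2) = Real.sqrt (π / b) / (2 * b) := by
  have habs : ∫ y : ℝ, y ^ 2 * Real.exp (-b * y ^ 2)
      = 2 * ∫ y in Set.Ioi (0:ℝ), y ^ 2 * Real.exp (-b * y ^ 2) := by
    rw [← integral_comp_abs (f := fun y : ℝ => y ^ 2 * Real.exp (-b * y ^ 2))]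
    congr 1; funext y; rw [sq_abs]
  have hIoi := integral_rpow_mul_exp_neg_mul_rpow (p := 2) (q := 2)
      (by norm_num) (by norm_num) hb
  simp only [Real.rpow_two] at hIoi
  have hg : Real.Gamma ((2 + 1) / 2) = Real.sqrt π / 2 := by
    rw [show ((2:ℝ) + 1) / 2 = 1/2 + 1 by norm_num, Real.Gamma_add_one (by norm_num),
      Real.Gamma_one_half_eq]
    ring
  rw [habs, hIoi, hg]
  rw [show (-((2:ℝ) + 1) / 2) = (-(1/2) + -1) by norm_num, Real.rpow_add hb,
    Real.rpow_neg_one, Real.rpow_neg hb.le, ← Real.sqrt_eq_rpow,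
    Real.sqrt_div pi_pos.le]
  have hsb : (0:ℝ) < Real.sqrt b := Real.sqrt_pos.mpr hb
  field_simp


lemma gaussPdf_eq (m s2 u : ℝ) :
    gaussPdf m s2 u
      = (Real.sqrt (2 * π * s2))⁻¹ * Real.exp (-(2 * s2)⁻¹ * (u - m) ^ 2) := by
  unfold gaussPdf
  congr 1
  ring_nf

lemma gauss_moment {s2 : ℝ} (hs2 : 0 < s2) (m α β γ : ℝ) :
    ∫ u : ℝ, (α + β * (u - m) + γ * (u - m) ^ 2) * gaussPdf m s2 u = α + γ * s2 := by
  set b : ℝ := (2 * s2)⁻¹ with hbdef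
  have hb : 0 < b := by positivity
  set c : ℝ := (Real.sqrt (2 * π * s2))⁻¹ with hcdef
  have hsqpos : 0 < Real.sqrt (2 * π * s2) := Real.sqrt_pos.mpr (by positivity)
  have hc : 0 < c := by positivity
  have hsq : Real.sqrt (π / b) = Real.sqrt (2 * π * s2) := by
    congr 1
    rw [hbdef]
    field_simp
  have key : (fun u : ℝ => (α + β * (u - m) + γ * (u - m) ^ 2) * gaussPdf m s2 u)
      = fun u : ℝ => (fun y : ℝ => (α * c) * Real.exp (-b * y ^ 2)
          + (β * c) * (y * Real.exp (-b * y ^ 2))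
          + (γ * c) * (y ^ 2 * Real.exp (-b * y ^ 2))) (u - m) := by
    funext u
    simp only [gaussPdf_eq, ← hbdef, ← hcdef]
    ring
  rw [key, integral_sub_right_eq_self (fun y : ℝ => (α * c) * Real.exp (-b * y ^ 2)
      + (β * c) * (y * Real.exp (-b * y ^ 2))
      + (γ * c) * (y ^ 2 * Real.exp (-b * y ^ 2))) m]
  have i0 := integrable_exp_neg_mul_sq hb
  have i1 := integrable_mul_exp_neg_mul_sq hb
  have i2 := integrable_sq_mul_exp_neg_mul_sq hb
  have j0 : Integrable (fun x : ℝ => (α * c) * Real.exp (-b * x ^ 2)) volume := i0.const_mul _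
  have j1 : Integrable (fun x : ℝ => (β * c) * (x * Real.exp (-b * x ^ 2))) volume := i1.const_mul _
  have j2 : Integrable (fun x : ℝ => (γ * c) * (x ^ 2 * Real.exp (-b * x ^ 2))) volume := i2.const_mul _
  have j01 : Integrable (fun x : ℝ => (α * c) * Real.exp (-b * x ^ 2)
      + (β * c) * (x * Real.exp (-b * x ^ 2))) volume := j0.add j1
  rw [integral_add j01 j2, integral_add j0 j1,
    integral_const_mul, integral_const_mul, integral_const_mul,
    integral_gaussian, integral_mul_exp_neg_mul_sq_zero, integral_sq_mul_exp_neg_mul_sq hb,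
    hsq]
  have h2 : Real.sqrt (2 * π * s2) / (2 * b) = Real.sqrt (2 * π * s2) * s2 := by
    rw [hbdef]; field_simp
  rw [h2]
  have h1 : c * Real.sqrt (2 * π * s2) = 1 := inv_mul_cancel₀ hsqpos.ne'
  linear_combination (α + γ * s2) * h1

theorem stmt9 {Ω : Type*} [MeasurableSpace Ω] (μ : Measure Ω) [IsProbabilityMeasure μ]
    (r : Ω → ℝ) (hmeas : Measurable r)
    (a σ rf lam w K B C ft1 x : ℝ)
    (hσ : 0 < σ) (hrf : 0 < rf) (hlam : 0 < lam) (hB : 0 < B) (hC : 0 < C)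
    (hra : ∫ ω, r ω ∂μ = a) (hrv : ∫ ω, (r ω) ^ 2 ∂μ = a ^ 2 + σ ^ 2)
    (T t : ℕ) (ht : t < T)
    (A : ℝ) (hA : A = rf ^ 2 + (a ^ 2 + σ ^ 2) * K ^ 2 + 2 * rf * a * K) (hApos : 0 < A) :
    let ρt : ℝ := (rf⁻¹) ^ (T - t)
    let ρt1 : ℝ := (rf⁻¹) ^ (T - (t + 1))
    let pt : ℝ → ℝ := gaussPdf (K * (x - ρt * w)) (lam * B * C ^ (T - t - 1))
    let Jnext : ℝ → ℝ := fun y => A ^ (T - t - 1) * (y - ρt1 * w) ^ 2 + ft1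
    (∫ ω, ∫ u, Jnext (rf * x + r ω * u) * pt u ∂volume ∂μ) +
        lam * ∫ u, pt u * Real.log (pt u) =
      A ^ (T - t) * (x - ρt * w) ^ 2 +
        A ^ (T - t - 1) * (a ^ 2 + σ ^ 2) * (lam * B * C ^ (T - t - 1)) -
        lam / 2 * Real.log (2 * Real.pi * lam * B * C ^ (T - t - 1)) - lam / 2 + ft1 := by
  intro ρt ρt1 pt Jnext
  set n : ℕ := T - t - 1 with hn
  have hTt : T - t = n + 1 := by omega
  have hs2 : 0 < lam * B * C ^ n := by positivity
  set s2 : ℝ := lam * B * C ^ n with hs2def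
  set m : ℝ := K * (x - ρt * w) with hm
  set c0 : ℝ := rf * x - ρt1 * w with hc0
  -- inner integral
  have hinner : ∀ R : ℝ, (∫ u, Jnext (rf * x + R * u) * pt u)
      = (A ^ n * c0 ^ 2 + ft1) + (2 * A ^ n * c0 * m) * R + (A ^ n * (m ^ 2 + s2)) * R ^ 2 := by
    intro R
    have h := gauss_moment hs2 m ((A ^ n * (c0 + R * m) ^ 2 + ft1)) (2 * A ^ n * (c0 + R * m) * R)
      (A ^ n * R ^ 2)
    have hfun : (fun u => Jnext (rf * x + R * u) * pt u)
        = fun u : ℝ => ((A ^ n * (c0 + R * m) ^ 2 + ft1) + (2 * A ^ n * (c0 + R * m) * R) * (u - m)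
            + (A ^ n * R ^ 2) * (u - m) ^ 2) * gaussPdf m s2 u := by
      funext u
      simp only [Jnext, pt, hm, hs2def, hn, hc0]
      ring
    rw [hfun, h]
    ring
  -- entropy integral
  have hsqpos : 0 < Real.sqrt (2 * π * s2) := Real.sqrt_pos.mpr (by positivity)
  have hent : (∫ u, pt u * Real.log (pt u))
      = -(1/2) * Real.log (2 * π * s2) - 1/2 := by
    have h := gauss_moment hs2 m (Real.log ((Real.sqrt (2 * π * s2))⁻¹)) 0 (-(2 * s2)⁻¹)
    have hfun : (fun u => pt u * Real.log (pt u))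
        = fun u : ℝ => (Real.log ((Real.sqrt (2 * π * s2))⁻¹) + 0 * (u - m)
            + (-(2 * s2)⁻¹) * (u - m) ^ 2) * gaussPdf m s2 u := by
      funext u
      have hp : pt u = (Real.sqrt (2 * π * s2))⁻¹ * Real.exp (-(2 * s2)⁻¹ * (u - m) ^ 2) := by
        simp only [pt, hm, hs2def]
        exact gaussPdf_eq _ _ _
      have hlog : Real.log (pt u)
          = Real.log ((Real.sqrt (2 * π * s2))⁻¹) + (-(2 * s2)⁻¹ * (u - m) ^ 2) := by
        rw [hp, Real.log_mul (by positivity) (Real.exp_ne_zero _), Real.log_exp]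
      rw [hlog, hp]
      have : gaussPdf m s2 u = (Real.sqrt (2 * π * s2))⁻¹ * Real.exp (-(2 * s2)⁻¹ * (u - m) ^ 2) :=
        gaussPdf_eq _ _ _
      rw [← this]
      simp only [pt, hm, hs2def] at this ⊢
      rw [this]
      ring
    rw [hfun, h, Real.log_inv, Real.log_sqrt (by positivity)]
    field_simp
    ring
  -- integrability of r, r^2
  have hr2 : Integrable (fun ω => (r ω) ^ 2) μ := by
    by_contra h
    rw [integral_undef h] at hrv
    nlinarith
  have hr1 : Integrable r μ := by
    refine ((integrable_const (1:ℝ)).add hr2).mono' hmeas.aestronglyMeasurable ?_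
    filter_upwards with ω
    simp only [Pi.add_apply, Real.norm_eq_abs]
    nlinarith [sq_abs (r ω), abs_nonneg (r ω), sq_nonneg (|r ω| - 1)]
  -- outer integral
  have houter : (∫ ω, ∫ u, Jnext (rf * x + r ω * u) * pt u ∂volume ∂μ)
      = (A ^ n * c0 ^ 2 + ft1) + (2 * A ^ n * c0 * m) * a
        + (A ^ n * (m ^ 2 + s2)) * (a ^ 2 + σ ^ 2) := by
    have : (fun ω => ∫ u, Jnext (rf * x + r ω * u) * pt u)
        = fun ω => (A ^ n * c0 ^ 2 + ft1) + ((2 * A ^ n * c0 * m) * r ω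
            + (A ^ n * (m ^ 2 + s2)) * (r ω) ^ 2) := by
      funext ω; rw [hinner (r ω)]; ring
    have j1 : Integrable (fun ω => (2 * A ^ n * c0 * m) * r ω) μ := hr1.const_mul _
    have j2 : Integrable (fun ω => (A ^ n * (m ^ 2 + s2)) * (r ω) ^ 2) μ := hr2.const_mul _
    have j12 : Integrable (fun ω => (2 * A ^ n * c0 * m) * r ω
        + (A ^ n * (m ^ 2 + s2)) * (r ω) ^ 2) μ := j1.add j2
    rw [this, integral_add (integrable_const _) j12, integral_add j1 j2,
      integral_const_mul, integral_const_mul, hra, hrv, integral_const, probReal_univ]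
    simp only [ENNReal.toReal_one, smul_eq_mul, one_mul]
    ring
  -- final algebra
  rw [houter, hent]
  have hρ : ρt1 = rf * ρt := by
    have : ρt = rf⁻¹ * ρt1 := by
      simp only [ρt, ρt1, show T - t = (T - (t+1)) + 1 by omega, pow_succ]
      ring
    rw [this]
    field_simp
  have hApow : A ^ (T - t) = A ^ n * A := by rw [hTt, pow_succ]
  have hlogarg : 2 * Real.pi * lam * B * C ^ (T - t - 1) = 2 * π * s2 := by
    rw [hs2def, hn]; ring
  rw [hlogarg, hApow]
  simp only [hm, hc0, hρ, hA, ← hn, ← hs2def]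
  ring
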